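/- (Lemma 3) Suppose X^n ⊂ ℝ^d (d ≥ 1) is in general position. Then there exists a point x_0 ∈ M(X^n) such that for every x ∈ ℝ^d with x ≠ x_0 there exists a unit vector u ∈ U_x with u·x < u·x_0; that is, U_x ∩ H_{x,x_0} ≠ ∅ for all x ≠ x_0. -/

import Mathlib

open scoped RealInnerProductSpace
open MeasureTheory

noncomputable section

/-- `E d` is the Euclidean space `ℝ^d`. -/
abbrev E (d : ℕ) : Type := EuclideanSpace ℝ (Fin d)

/-- A sample `X` of `n` points in `ℝ^d` is in general position if no affine hyperplane
(encoded as `{x | ⟪v, x⟫ = c}` for some `v ≠ 0`) contains more than `d` of the points. -/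
def inGeneralPosition {d n : ℕ} (X : Fin n → E d) : Prop :=
  ∀ v : E d, v ≠ 0 → ∀ c : ℝ, ({i : Fin n | ⟪v, X i⟫ = c} : Set (Fin n)).ncard ≤ d

/-- Number of sample points in the closed halfspace `{z | ⟪u, z⟫ ≤ ⟪u, x⟫}`. -/
def sideCount {d n : ℕ} (X : Fin n → E d) (u x : E d) : ℕ :=
  ({i : Fin n | ⟪u, X i⟫ ≤ ⟪u, x⟫} : Set (Fin n)).ncard

/-- Tukey's halfspace depth of `x` with respect to the sample `X`. -/
def depth {d n : ℕ} (X : Fin n → E d) (x : E d) : ℝ :=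
  sInf {r : ℝ | ∃ u : E d, ‖u‖ = 1 ∧ r = (sideCount X u x : ℝ) / (n : ℝ)}

/-- The maximum Tukey depth `λ*` of the sample `X`. -/
def maxDepth {d n : ℕ} (X : Fin n → E d) : ℝ :=
  sSup (Set.range (depth X))

/-- The set `M(X)` of deepest points. -/
def MSet {d n : ℕ} (X : Fin n → E d) : Set (E d) :=
  {x | depth X x = maxDepth X}

/-- `U_x`: the set of optimal (unit) directions realizing the depth at `x`. -/
def USet {d n : ℕ} (X : Fin n → E d) (x : E d) : Set (E d) :=
  {u | ‖u‖ = 1 ∧ (sideCount X u x : ℝ) / (n : ℝ) = depth X x}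

/-- `H_{x,y}`: the open hemisphere of unit directions `u` with `⟪u, x⟫ < ⟪u, y⟫`. -/
def HSet {d : ℕ} (x y : E d) : Set (E d) :=
  {u | ‖u‖ = 1 ∧ ⟪u, x⟫ < ⟪u, y⟫}

/-- `B_z`. -/
def BSet {d n : ℕ} (X : Fin n → E d) (z : E d) : Set (E d) :=
  {x | x ∈ MSet X ∧ USet X x ∩ HSet x z = ∅}

/-- `B̃_z = B_z \ {z}`. -/
def BTilde {d n : ℕ} (X : Fin n → E d) (z : E d) : Set (E d) :=
  BSet X z \ {z}

/-- `v` is a unit vector normal to an affine hyperplane spanned by `d` of the sample points. -/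
def normalToSampleHyperplane {d n : ℕ} (X : Fin n → E d) (v : E d) : Prop :=
  ‖v‖ = 1 ∧ ∃ (s : Finset (Fin n)) (c : ℝ), s.card = d ∧
    (affineSpan ℝ (X '' (s : Set (Fin n))) : Set (E d)) = {x : E d | ⟪v, x⟫ = c}

/-- Condition (2.1) on a unit direction `u`. -/
def cond21 {d n : ℕ} (X : Fin n → E d) (u : E d) : Prop :=
  ∀ v : E d, normalToSampleHyperplane X v → ⟪u, v⟫ ≠ 0

/-- `A` represents the columns of a `d × (d-1)` matrix which together with the unit
vector `u` form an orthonormal basis of `ℝ^d`. -/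
def IsAu {d : ℕ} (u : E d) (A : Fin (d - 1) → E d) : Prop :=
  ‖u‖ = 1 ∧ Orthonormal ℝ A ∧ ∀ j, ⟪A j, u⟫ = 0

/-- The `A_u`-projection `A_u^T x ∈ ℝ^{d-1}` of a point `x ∈ ℝ^d`. -/
def proj {d : ℕ} (A : Fin (d - 1) → E d) (x : E d) : E (d - 1) :=
  (WithLp.equiv 2 (Fin (d - 1) → ℝ)).symm (fun j => ⟪A j, x⟫)

/-- The embedding `A_u x = ∑ j x_j A_j ∈ ℝ^d` of a point `x ∈ ℝ^{d-1}`. -/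
def embed {d : ℕ} (A : Fin (d - 1) → E d) (x : E (d - 1)) : E d :=
  ∑ j, x j • A j

/-- `λ₀ = inf_{u ∈ S^{d-1}} λ*(X_u^n)`, the infimum over all directions of the maximum
Tukey depth of the projected sample. -/
def lambda0 {d n : ℕ} (X : Fin n → E d) : ℝ :=
  sInf {r : ℝ | ∃ (u : E d) (A : Fin (d - 1) → E d),
    IsAu u A ∧ r = maxDepth (fun i => proj A (X i))}

/-- The average (barycenter) of a set `K ⊆ ℝ^d`, taken with respect to the Hausdorff
measure of dimension equal to the affine dimension of `K`. -/
def setAverage {d : ℕ} (K : Set (E d)) : E d :=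
  (μH[(Module.finrank ℝ (affineSpan ℝ K).direction : ℝ)] K).toReal⁻¹ •
    ∫ x in K, x ∂(μH[(Module.finrank ℝ (affineSpan ℝ K).direction : ℝ)])

/-- Tukey's halfspace median: the average of all deepest points. -/
def TukeyMedian {d n : ℕ} (X : Fin n → E d) : E d :=
  setAverage (MSet X)

/-- `m` contaminating points suffice to break down the Tukey median at `X`. -/
def breaksDown {d n : ℕ} (X : Fin n → E d) (m : ℕ) : Prop :=
  ∀ C : ℝ, ∃ Y : Fin m → E d, C < ‖TukeyMedian (Fin.append X Y) - TukeyMedian X‖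

/-- The finite sample (additional) breakdown point of the Tukey median at `X`. -/
def FSBP {d n : ℕ} (X : Fin n → E d) : ℝ :=
  sInf {r : ℝ | ∃ m : ℕ, 1 ≤ m ∧ breaksDown X m ∧ r = (m : ℝ) / ((n : ℝ) + (m : ℝ))}

namespace Lemma3Aux

variable {d n : ℕ}

/-- count at a real threshold -/
def cntT (X : Fin n → E d) (u : E d) (t : ℝ) : ℕ :=
  ({i : Fin n | ⟪u, X i⟫ ≤ t} : Set (Fin n)).ncard

lemma sideCount_eq_cntT (X : Fin n → E d) (u x : E d) :
    sideCount X u x = cntT X u ⟪u, x⟫ := rfl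

lemma cntT_mono (X : Fin n → E d) (u : E d) {s t : ℝ} (h : s ≤ t) :
    cntT X u s ≤ cntT X u t :=
  Set.ncard_le_ncard (fun i hi => le_trans hi h) (Set.toFinite _)

lemma cntT_le_n (X : Fin n → E d) (u : E d) (t : ℝ) : cntT X u t ≤ n := by
  have h := Set.ncard_le_ncard (Set.subset_univ {i : Fin n | ⟪u, X i⟫ ≤ t}) (Set.toFinite _)
  simpa [cntT, Set.ncard_univ] using h

lemma sideCount_smul (X : Fin n → E d) (u x : E d) {t : ℝ} (ht : 0 < t) :
    sideCount X (t • u) x = sideCount X u x := by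
  unfold sideCount
  congr 1
  ext i
  simp only [Set.mem_setOf_eq, real_inner_smul_left]
  exact mul_le_mul_iff_right₀ ht

lemma exists_pos_le {P : Fin n → Prop} [DecidablePred P] (g : Fin n → ℝ)
    (hg : ∀ i, P i → 0 < g i) : ∃ δ : ℝ, 0 < δ ∧ ∀ i, P i → δ ≤ g i := by
  classical
  rcases (Finset.univ.filter P).eq_empty_or_nonempty with h | h
  · refine ⟨1, one_pos, fun i hi => absurd (Finset.mem_filter.mpr ⟨Finset.mem_univ _, hi⟩) (by simp [h] : i ∉ Finset.filter P Finset.univ)⟩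
  · refine ⟨(Finset.univ.filter P).inf' h g, ?_, fun i hi => ?_⟩
    · rw [Finset.lt_inf'_iff]
      intro i hi
      exact hg i (Finset.mem_filter.mp hi).2
    · exact Finset.inf'_le g (Finset.mem_filter.mpr ⟨Finset.mem_univ _, hi⟩)

/-- perturbing the direction can only lose points from the closed halfspace -/
lemma pert_dir (X : Fin n → E d) (u x : E d) :
    ∃ δ : ℝ, 0 < δ ∧ ∀ u' : E d, ‖u' - u‖ < δ →
      ({i : Fin n | ⟪u', X i⟫ ≤ ⟪u', x⟫} : Set (Fin n)) ⊆ {i | ⟪u, X i⟫ ≤ ⟪u, x⟫} := by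
  classical
  obtain ⟨δ, hδ, hδle⟩ := exists_pos_le (P := fun i => ⟪u, x⟫ < ⟪u, X i⟫)
    (fun i => (⟪u, X i⟫ - ⟪u, x⟫) / (‖X i - x‖ + 1))
    (fun i hi => div_pos (by linarith) (by positivity))
  refine ⟨δ, hδ, fun u' hu' i hi => ?_⟩
  simp only [Set.mem_setOf_eq] at hi ⊢
  by_contra hcon
  push_neg at hcon
  have hkey := hδle i hcon
  have h1 : ⟪u, X i - x⟫ = ⟪u, X i⟫ - ⟪u, x⟫ := by rw [inner_sub_right]
  have h2 : ⟪u', X i - x⟫ = ⟪u', X i⟫ - ⟪u', x⟫ := by rw [inner_sub_right]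
  have h3 : |⟪u' - u, X i - x⟫| ≤ ‖u' - u‖ * ‖X i - x‖ := abs_real_inner_le_norm _ _
  have h4 : ⟪u' - u, X i - x⟫ = ⟪u', X i - x⟫ - ⟪u, X i - x⟫ := by rw [inner_sub_left]
  have h5 : ‖u' - u‖ * ‖X i - x‖ < δ * (‖X i - x‖ + 1) := by
    have h0 : (0:ℝ) ≤ ‖X i - x‖ := norm_nonneg _
    nlinarith [hu']
  have h6 : δ * (‖X i - x‖ + 1) ≤ ⟪u, X i⟫ - ⟪u, x⟫ := by
    rw [le_div_iff₀ (by positivity : (0:ℝ) < ‖X i - x‖ + 1)] at hkey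
    linarith
  have h7 : ⟪u', X i - x⟫ > 0 := by
    have := abs_le.mp h3
    nlinarith
  rw [h2] at h7
  linarith


/-- there are no sample values just above `⟪u, z⟫` -/
lemma pert_gap (X : Fin n → E d) (u z : E d) :
    ∃ δ : ℝ, 0 < δ ∧ ∀ t : ℝ, t < ⟪u, z⟫ + δ → cntT X u t ≤ sideCount X u z := by
  classical
  obtain ⟨δ, hδ, hδle⟩ := exists_pos_le (P := fun i => ⟪u, z⟫ < ⟪u, X i⟫)
    (fun i => ⟪u, X i⟫ - ⟪u, z⟫) (fun i hi => by linarith)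
  refine ⟨δ, hδ, fun t ht => ?_⟩
  rw [sideCount_eq_cntT]
  apply Set.ncard_le_ncard _ (Set.toFinite _)
  intro i hi
  simp only [Set.mem_setOf_eq] at hi ⊢
  by_contra hcon
  push_neg at hcon
  have := hδle i hcon
  linarith

section Depth

lemma exists_unit (hd : 1 ≤ d) : ∃ u : E d, ‖u‖ = 1 :=
  ⟨EuclideanSpace.single (⟨0, hd⟩ : Fin d) (1:ℝ), by simp [EuclideanSpace.norm_single]⟩

lemma depthSet_bddBelow (X : Fin n → E d) (x : E d) :
    BddBelow {r : ℝ | ∃ u : E d, ‖u‖ = 1 ∧ r = (sideCount X u x : ℝ) / (n : ℝ)} := by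
  refine ⟨0, fun r hr => ?_⟩
  obtain ⟨u, hu, rfl⟩ := hr
  positivity

lemma depth_le (X : Fin n → E d) (x : E d) {u : E d} (hu : ‖u‖ = 1) :
    depth X x ≤ (sideCount X u x : ℝ) / (n : ℝ) :=
  csInf_le (depthSet_bddBelow X x) ⟨u, hu, rfl⟩

lemma depth_attained (hd : 1 ≤ d) (X : Fin n → E d) (x : E d) :
    ∃ u : E d, ‖u‖ = 1 ∧ (sideCount X u x : ℝ) / (n : ℝ) = depth X x := by
  classical
  obtain ⟨u₁, hu₁⟩ := exists_unit (d := d) hd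
  set T : Set ℕ := {c | ∃ u : E d, ‖u‖ = 1 ∧ sideCount X u x = c} with hT
  have hTne : T.Nonempty := ⟨sideCount X u₁ x, u₁, hu₁, rfl⟩
  obtain ⟨u₀, hu₀, hc₀⟩ := Nat.sInf_mem hTne
  refine ⟨u₀, hu₀, ?_⟩
  have hle : ∀ r ∈ {r : ℝ | ∃ u : E d, ‖u‖ = 1 ∧ r = (sideCount X u x : ℝ) / (n : ℝ)},
      (sideCount X u₀ x : ℝ) / (n : ℝ) ≤ r := by
    rintro r ⟨u, hu, rfl⟩
    rcases Nat.eq_zero_or_pos n with hn | hn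
    · simp [hn]
    · have : sideCount X u₀ x ≤ sideCount X u x := hc₀ ▸ Nat.sInf_le ⟨u, hu, rfl⟩
      have h1 : (sideCount X u₀ x : ℝ) ≤ (sideCount X u x : ℝ) := by exact_mod_cast this
      have h2 : (0:ℝ) < (n:ℝ) := by exact_mod_cast hn
      exact div_le_div_of_nonneg_right h1 h2.le
  exact le_antisymm (le_csInf ⟨_, u₁, hu₁, rfl⟩ hle) (depth_le X x hu₀)

lemma depth_mem_image (hd : 1 ≤ d) (X : Fin n → E d) (x : E d) :
    depth X x ∈ (fun c : ℕ => (c : ℝ) / (n : ℝ)) '' (Set.Iic n) := by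
  obtain ⟨u, hu, h⟩ := depth_attained hd X x
  exact ⟨sideCount X u x, by simpa [sideCount_eq_cntT] using cntT_le_n X u ⟪u, x⟫, h⟩

lemma range_depth_finite (hd : 1 ≤ d) (X : Fin n → E d) :
    (Set.range (depth X)).Finite := by
  apply Set.Finite.subset (Set.Finite.image (fun c : ℕ => (c:ℝ)/(n:ℝ)) (Set.finite_Iic n))
  rintro r ⟨x, rfl⟩
  exact depth_mem_image hd X x

lemma range_depth_nonempty (X : Fin n → E d) : (Set.range (depth X)).Nonempty :=
  ⟨depth X 0, 0, rfl⟩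

lemma exists_mem_MSet (hd : 1 ≤ d) (X : Fin n → E d) : ∃ z, z ∈ MSet X := by
  have := Set.Nonempty.csSup_mem (range_depth_nonempty X) (range_depth_finite hd X)
  obtain ⟨z, hz⟩ := this
  exact ⟨z, hz⟩

lemma depth_le_maxDepth (hd : 1 ≤ d) (X : Fin n → E d) (x : E d) :
    depth X x ≤ maxDepth X :=
  le_csSup (Set.Finite.bddAbove (range_depth_finite hd X)) ⟨x, rfl⟩

end Depth


section VSet

/-- scale-free version of `USet` on an annulus -/
def VSet (X : Fin n → E d) (x : E d) : Set (E d) :=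
  {u | 1/2 < ‖u‖ ∧ ‖u‖ < 2 ∧ (sideCount X u x : ℝ) / (n : ℝ) = depth X x}

lemma mem_VSet_of_USet {X : Fin n → E d} {x u : E d} (hu : u ∈ USet X x) :
    u ∈ VSet X x := by
  obtain ⟨h1, h2⟩ := hu
  exact ⟨by rw [h1]; norm_num, by rw [h1]; norm_num, h2⟩

lemma norm_pos_of_VSet {X : Fin n → E d} {x u : E d} (hu : u ∈ VSet X x) : 0 < ‖u‖ :=
  lt_trans (by norm_num) hu.1

lemma sideCount_normalize {X : Fin n → E d} {u : E d} (hu : 0 < ‖u‖) (x : E d) :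
    sideCount X (‖u‖⁻¹ • u) x = sideCount X u x :=
  sideCount_smul X u x (inv_pos.mpr hu)

lemma normalize_mem_USet {X : Fin n → E d} {x u : E d} (hu : u ∈ VSet X x) :
    (‖u‖⁻¹ • u) ∈ USet X x := by
  have hpos := norm_pos_of_VSet hu
  constructor
  · rw [norm_smul, norm_inv, norm_norm, inv_mul_cancel₀ hpos.ne']
  · rw [sideCount_normalize hpos]
    exact hu.2.2

lemma mem_VSet_of_mem_USet_smul {X : Fin n → E d} {x u : E d} (hu : 0 < ‖u‖)
    (h1 : 1/2 < ‖u‖) (h2 : ‖u‖ < 2) (hU : (‖u‖⁻¹ • u) ∈ USet X x) : u ∈ VSet X x := by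
  refine ⟨h1, h2, ?_⟩
  rw [← sideCount_normalize hu]
  exact hU.2

lemma VSet_nonempty (hd : 1 ≤ d) (X : Fin n → E d) (x : E d) :
    (VSet X x).Nonempty := by
  obtain ⟨u, hu, h⟩ := depth_attained hd X x
  exact ⟨u, mem_VSet_of_USet ⟨hu, h⟩⟩

lemma VSet_isOpen (X : Fin n → E d) (x : E d) : IsOpen (VSet X x) := by
  rw [Metric.isOpen_iff]
  intro u₀ hu₀
  obtain ⟨h1, h2, h3⟩ := hu₀
  obtain ⟨δ, hδ, hsub⟩ := pert_dir X u₀ x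
  refine ⟨min δ (min (‖u₀‖ - 1/2) (2 - ‖u₀‖)),
    lt_min hδ (lt_min (by linarith) (by linarith)), fun u hu => ?_⟩
  rw [Metric.mem_ball, dist_eq_norm] at hu
  have hd1 : ‖u - u₀‖ < δ := lt_of_lt_of_le hu (min_le_left _ _)
  have hd2 : ‖u - u₀‖ < ‖u₀‖ - 1/2 := lt_of_lt_of_le hu ((min_le_right _ _).trans (min_le_left _ _))
  have hd3 : ‖u - u₀‖ < 2 - ‖u₀‖ := lt_of_lt_of_le hu ((min_le_right _ _).trans (min_le_right _ _))
  have hnorm : |‖u‖ - ‖u₀‖| ≤ ‖u - u₀‖ := abs_norm_sub_norm_le u u₀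
  rw [abs_le] at hnorm
  have hn1 : 1/2 < ‖u‖ := by linarith
  have hn2 : ‖u‖ < 2 := by linarith
  have hle : sideCount X u x ≤ sideCount X u₀ x :=
    Set.ncard_le_ncard (hsub u hd1) (Set.toFinite _)
  have hge : depth X x ≤ (sideCount X u x : ℝ) / (n : ℝ) := by
    have hpos : 0 < ‖u‖ := by linarith
    have := depth_le (u := ‖u‖⁻¹ • u) X x
      (by rw [norm_smul, norm_inv, norm_norm, inv_mul_cancel₀ hpos.ne'])
    rwa [sideCount_normalize hpos] at this
  refine ⟨hn1, hn2, le_antisymm ?_ hge⟩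
  have hcast : (sideCount X u x : ℝ) ≤ (sideCount X u₀ x : ℝ) := by exact_mod_cast hle
  calc (sideCount X u x : ℝ) / (n : ℝ) ≤ (sideCount X u₀ x : ℝ) / (n : ℝ) :=
        div_le_div_of_nonneg_right hcast (Nat.cast_nonneg n)
    _ = depth X x := h3

end VSet


section Bad

lemma strict_of_empty {X : Fin n → E d} {x z : E d} (hxz : x ≠ z)
    (hE : USet X x ∩ HSet x z = ∅) {u : E d} (hu : u ∈ USet X x) :
    ⟪u, z⟫ < ⟪u, x⟫ := by
  have hnot : ∀ v : E d, v ∈ USet X x → ¬ (⟪v, x⟫ < ⟪v, z⟫) := by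
    intro v hv hlt
    exact Set.eq_empty_iff_forall_notMem.mp hE v ⟨hv, hv.1, hlt⟩
  have hle : ⟪u, z⟫ ≤ ⟪u, x⟫ := not_lt.mp (hnot u hu)
  rcases lt_or_eq_of_le hle with h | h
  · exact h
  exfalso
  -- perturb u towards w := z - x
  set w : E d := z - x with hw
  have hwne : w ≠ 0 := sub_ne_zero_of_ne (Ne.symm hxz)
  have hwpos : 0 < ‖w‖ := norm_pos_iff.mpr hwne
  obtain ⟨δ, hδ, hsub⟩ := pert_dir X u x
  set ε : ℝ := min δ 1 / (2 * ‖w‖ + 2) with hε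
  have hεpos : 0 < ε := by
    apply div_pos (lt_min hδ one_pos); positivity
  have hεw : ε * ‖w‖ < min δ 1 := by
    rw [hε, div_mul_eq_mul_div, div_lt_iff₀ (by positivity)]
    have : 0 < min δ 1 := lt_min hδ one_pos
    nlinarith [hwpos]
  set u' : E d := u + ε • w with hu'
  have hdiff : ‖u' - u‖ = ε * ‖w‖ := by
    rw [hu']; simp [norm_smul, abs_of_pos hεpos]
  have hsub' := hsub u' (by rw [hdiff]; exact lt_of_lt_of_le hεw (min_le_left _ _))
  have hlt' : ⟪u', x⟫ < ⟪u', z⟫ := by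
    have huw : ⟪u, w⟫ = 0 := by rw [hw, inner_sub_right]; linarith
    have hinner : ⟪u', z⟫ - ⟪u', x⟫ = ε * ‖w‖ ^ 2 := by
      rw [← inner_sub_right, show z - x = w from hw.symm, hu', inner_add_left,
        real_inner_smul_left, huw, real_inner_self_eq_norm_sq]
      ring
    have hq : 0 < ε * ‖w‖ ^ 2 := by positivity
    linarith
  have hu'norm : 0 < ‖u'‖ := by
    have h1 : ‖u‖ - ‖u' - u‖ ≤ ‖u'‖ := by
      have := norm_sub_norm_le u' u
      have h2 : ‖u‖ ≤ ‖u'‖ + ‖u' - u‖ := by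
        calc ‖u‖ = ‖u' - (u' - u)‖ := by congr 1; abel
          _ ≤ ‖u'‖ + ‖u' - u‖ := norm_sub_le _ _
      linarith
    have : ε * ‖w‖ < 1 := lt_of_lt_of_le hεw (min_le_right _ _)
    rw [hu.1] at h1
    rw [hdiff] at h1
    linarith
  set v : E d := ‖u'‖⁻¹ • u' with hv
  have hvnorm : ‖v‖ = 1 := by
    rw [hv, norm_smul, norm_inv, norm_norm, inv_mul_cancel₀ hu'norm.ne']
  have hvcount : sideCount X v x = sideCount X u' x := sideCount_smul X u' x (inv_pos.mpr hu'norm)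
  have hle1 : sideCount X u' x ≤ sideCount X u x := Set.ncard_le_ncard hsub' (Set.toFinite _)
  have hge1 : depth X x ≤ (sideCount X v x : ℝ) / (n : ℝ) := depth_le X x hvnorm
  have heq : (sideCount X v x : ℝ) / (n : ℝ) = depth X x := by
    refine le_antisymm ?_ hge1
    have hcast : (sideCount X v x : ℝ) ≤ (sideCount X u x : ℝ) := by
      rw [hvcount]; exact_mod_cast hle1
    calc (sideCount X v x : ℝ) / (n : ℝ) ≤ (sideCount X u x : ℝ) / (n : ℝ) :=
          div_le_div_of_nonneg_right hcast (Nat.cast_nonneg n)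
      _ = depth X x := hu.2
  apply hnot v ⟨hvnorm, heq⟩
  rw [hv, real_inner_smul_left, real_inner_smul_left]
  exact mul_lt_mul_of_pos_left hlt' (inv_pos.mpr hu'norm)

lemma bad_step (hd : 1 ≤ d) {X : Fin n → E d} {x z : E d} (hz : z ∈ MSet X)
    (hxz : x ≠ z) (hE : USet X x ∩ HSet x z = ∅) :
    x ∈ MSet X ∧ (∀ u, u ∈ VSet X x → u ∈ VSet X z ∧ ⟪u, z⟫ < ⟪u, x⟫) := by
  have key : ∀ u, u ∈ USet X x → u ∈ USet X z ∧ ⟪u, z⟫ < ⟪u, x⟫ ∧ depth X x = maxDepth X := by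
    intro u hu
    have hlt := strict_of_empty hxz hE hu
    have hcnt : sideCount X u z ≤ sideCount X u x := by
      rw [sideCount_eq_cntT, sideCount_eq_cntT]
      exact cntT_mono X u hlt.le
    have hcast : (sideCount X u z : ℝ) ≤ (sideCount X u x : ℝ) := by exact_mod_cast hcnt
    have h1 : depth X z ≤ (sideCount X u z : ℝ) / (n : ℝ) := depth_le X z hu.1
    have h2 : (sideCount X u z : ℝ) / (n : ℝ) ≤ (sideCount X u x : ℝ) / (n : ℝ) :=
      div_le_div_of_nonneg_right hcast (Nat.cast_nonneg n)
    have h3 : (sideCount X u x : ℝ) / (n : ℝ) = depth X x := hu.2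
    have h4 : depth X x ≤ maxDepth X := depth_le_maxDepth hd X x
    have h5 : maxDepth X = depth X z := hz.symm
    refine ⟨⟨hu.1, by linarith⟩, hlt, by linarith⟩
  obtain ⟨u₀, hu₀n, hu₀⟩ := depth_attained hd X x
  have hxM : x ∈ MSet X := (key u₀ ⟨hu₀n, hu₀⟩).2.2
  refine ⟨hxM, fun u hu => ?_⟩
  have hpos := norm_pos_of_VSet hu
  have h := key _ (normalize_mem_USet hu)
  constructor
  · exact mem_VSet_of_mem_USet_smul hpos hu.1 hu.2.1 h.1
  · have := h.2.1
    rw [real_inner_smul_left, real_inner_smul_left] at this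
    have hinv : 0 < ‖u‖⁻¹ := inv_pos.mpr hpos
    exact lt_of_mul_lt_mul_left (by exact this) hinv.le

end Bad


section Compact

variable (hd : 1 ≤ d) (hn : 0 < n)

lemma maxDepth_pos (hd : 1 ≤ d) (hn : 0 < n) (X : Fin n → E d) :
    1 / (n : ℝ) ≤ maxDepth X := by
  set i₀ : Fin n := ⟨0, hn⟩
  obtain ⟨u, hu, h⟩ := depth_attained hd X (X i₀)
  have hone : 1 ≤ sideCount X u (X i₀) := by
    rw [Nat.one_le_iff_ne_zero, ← Nat.pos_iff_ne_zero]
    rw [sideCount]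
    rw [Set.ncard_pos (Set.toFinite _)]
    exact ⟨i₀, by simp only [Set.mem_setOf_eq]; exact le_refl _⟩
  have h1 : 1 / (n : ℝ) ≤ (sideCount X u (X i₀) : ℝ) / (n : ℝ) :=
    div_le_div_of_nonneg_right (by exact_mod_cast hone) (Nat.cast_nonneg n)
  calc 1 / (n : ℝ) ≤ (sideCount X u (X i₀) : ℝ) / (n : ℝ) := h1
    _ = depth X (X i₀) := h
    _ ≤ maxDepth X := depth_le_maxDepth hd X _

lemma MSet_bounded (hd : 1 ≤ d) (hn : 0 < n) (X : Fin n → E d) {R : ℝ}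
    (hR0 : 0 ≤ R) (hR : ∀ i, ‖X i‖ ≤ R) : MSet X ⊆ Metric.closedBall 0 R := by
  intro x hx
  rw [Metric.mem_closedBall, dist_zero_right]
  by_contra hcon
  push_neg at hcon
  have hxpos : 0 < ‖x‖ := lt_of_le_of_lt hR0 hcon
  set u : E d := -(‖x‖⁻¹ • x) with hu
  have hunorm : ‖u‖ = 1 := by
    rw [hu, norm_neg, norm_smul, norm_inv, norm_norm, inv_mul_cancel₀ hxpos.ne']
  have hempty : sideCount X u x = 0 := by
    rw [sideCount, Set.ncard_eq_zero (Set.toFinite _)]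
    rw [Set.eq_empty_iff_forall_notMem]
    intro i hi
    simp only [Set.mem_setOf_eq, hu, inner_neg_left, real_inner_smul_left, neg_le_neg_iff] at hi
    have h1 : ⟪x, X i⟫ ≤ ‖x‖ * ‖X i‖ := real_inner_le_norm x (X i)
    have h2 : ⟪x, x⟫ = ‖x‖ ^ 2 := real_inner_self_eq_norm_sq x
    have h3 : ‖x‖⁻¹ * ⟪x, x⟫ ≤ ‖x‖⁻¹ * ⟪x, X i⟫ := hi
    have h4 : ‖x‖⁻¹ * ⟪x, x⟫ = ‖x‖ := by
      rw [h2]; field_simp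
    have h5 : ‖x‖⁻¹ * ⟪x, X i⟫ ≤ ‖X i‖ := by
      calc ‖x‖⁻¹ * ⟪x, X i⟫ ≤ ‖x‖⁻¹ * (‖x‖ * ‖X i‖) :=
            mul_le_mul_of_nonneg_left h1 (by positivity)
        _ = ‖X i‖ := by field_simp
    have := hR i
    linarith
  have hdep : depth X x ≤ 0 := by
    have := depth_le X x hunorm
    rw [hempty] at this
    simpa using this
  have h1 := maxDepth_pos hd hn X
  have h2 : 0 < 1 / (n : ℝ) := by positivity
  have := hx
  rw [MSet, Set.mem_setOf_eq] at this
  linarith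

lemma MSet_closed (hd : 1 ≤ d) (X : Fin n → E d) : IsClosed (MSet X) := by
  rw [← isOpen_compl_iff, Metric.isOpen_iff]
  intro x hx
  have hlt : depth X x < maxDepth X :=
    lt_of_le_of_ne (depth_le_maxDepth hd X x) (by simpa [MSet] using hx)
  obtain ⟨u, hu, hattain⟩ := depth_attained hd X x
  obtain ⟨δ, hδ, hgap⟩ := pert_gap X u x
  refine ⟨δ / 2, by positivity, fun y hy => ?_⟩
  rw [Metric.mem_ball, dist_eq_norm] at hy
  have hiy : ⟪u, y⟫ < ⟪u, x⟫ + δ := by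
    have h1 : ⟪u, y⟫ - ⟪u, x⟫ ≤ |⟪u, y - x⟫| := by
      rw [inner_sub_right]; exact le_abs_self _
    have h2 : |⟪u, y - x⟫| ≤ ‖u‖ * ‖y - x‖ := abs_real_inner_le_norm _ _
    rw [hu, one_mul] at h2
    linarith
  have hcnt : sideCount X u y ≤ sideCount X u x := by
    rw [sideCount_eq_cntT X u y]
    exact hgap _ hiy
  have hdy : depth X y < maxDepth X := by
    have h1 := depth_le X y hu
    have hcast : (sideCount X u y : ℝ) ≤ (sideCount X u x : ℝ) := by exact_mod_cast hcnt
    have h2 : (sideCount X u y : ℝ) / (n : ℝ) ≤ (sideCount X u x : ℝ) / (n : ℝ) :=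
      div_le_div_of_nonneg_right hcast (Nat.cast_nonneg n)
    rw [hattain] at h2
    linarith
  simp only [Set.mem_compl_iff, MSet, Set.mem_setOf_eq]
  exact ne_of_lt hdy

lemma MSet_isCompact (hd : 1 ≤ d) (hn : 0 < n) (X : Fin n → E d) {R : ℝ}
    (hR0 : 0 ≤ R) (hR : ∀ i, ‖X i‖ ≤ R) : IsCompact (MSet X) :=
  (isCompact_closedBall (0 : E d) R).of_isClosed_subset (MSet_closed hd X)
    (MSet_bounded hd hn X hR0 hR)

/-- stability of optimal directions for nearby deepest points -/
lemma VSet_stable {X : Fin n → E d} {z u : E d} (hz : z ∈ MSet X)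
    (hu : u ∈ VSet X z) :
    ∃ δ : ℝ, 0 < δ ∧ ∀ y ∈ MSet X, ‖y - z‖ < δ → u ∈ VSet X y := by
  obtain ⟨δ, hδ, hgap⟩ := pert_gap X u z
  refine ⟨δ / 2, by positivity, fun y hy hnear => ?_⟩
  have hnu : ‖u‖ < 2 := hu.2.1
  have hiy : ⟪u, y⟫ < ⟪u, z⟫ + δ := by
    have h1 : ⟪u, y⟫ - ⟪u, z⟫ ≤ |⟪u, y - z⟫| := by
      rw [inner_sub_right]; exact le_abs_self _
    have h2 : |⟪u, y - z⟫| ≤ ‖u‖ * ‖y - z‖ := abs_real_inner_le_norm _ _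
    have h3 : ‖u‖ * ‖y - z‖ ≤ 2 * ‖y - z‖ :=
      mul_le_mul_of_nonneg_right hnu.le (norm_nonneg _)
    have h4 : ‖y - z‖ < δ / 2 := hnear
    nlinarith [norm_nonneg (y - z)]
  have hcnt : sideCount X u y ≤ sideCount X u z := by
    rw [sideCount_eq_cntT X u y]
    exact hgap _ hiy
  have hpos := norm_pos_of_VSet hu
  have hge : depth X y ≤ (sideCount X u y : ℝ) / (n : ℝ) := by
    have := depth_le (u := ‖u‖⁻¹ • u) X y
      (by rw [norm_smul, norm_inv, norm_norm, inv_mul_cancel₀ hpos.ne'])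
    rwa [sideCount_normalize hpos] at this
  have hdepeq : depth X y = depth X z := by
    rw [hy, hz]  -- hy : y ∈ MSet X means depth X y = maxDepth X
  refine ⟨hu.1, hu.2.1, le_antisymm ?_ ?_⟩
  · have hcast : (sideCount X u y : ℝ) ≤ (sideCount X u z : ℝ) := by exact_mod_cast hcnt
    calc (sideCount X u y : ℝ) / (n : ℝ) ≤ (sideCount X u z : ℝ) / (n : ℝ) :=
          div_le_div_of_nonneg_right hcast (Nat.cast_nonneg n)
      _ = depth X z := hu.2.2
      _ = depth X y := hdepeq.symm
  · exact hdepeq ▸ (hdepeq ▸ hge)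

end Compact


set_option maxHeartbeats 2000000 in
open Filter Topology in
lemma exists_good (hd : 1 ≤ d) (hn : 0 < n) (X : Fin n → E d) :
    ∃ z ∈ MSet X, ∀ x : E d, x ≠ z → (USet X x ∩ HSet x z).Nonempty := by
  classical
  obtain ⟨R₀, hR₀⟩ := Finset.exists_le (Finset.univ.image fun i : Fin n => ‖X i‖)
  set R : ℝ := max R₀ 0 with hRdef
  have hR0 : (0:ℝ) ≤ R := le_max_right _ _
  have hRb : ∀ i, ‖X i‖ ≤ R := fun i =>
    le_trans (hR₀ _ (Finset.mem_image_of_mem _ (Finset.mem_univ i))) (le_max_left _ _)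
  have hMne : (MSet X).Nonempty := exists_mem_MSet hd X
  have hMc : IsCompact (MSet X) := MSet_isCompact hd hn X hR0 hRb
  have hMb : ∀ y ∈ MSet X, ‖y‖ ≤ R := fun y hy => by
    have := MSet_bounded hd hn X hR0 hRb hy
    rwa [Metric.mem_closedBall, dist_zero_right] at this
  set c : ℝ := 2 * R + 1 with hcdef
  have hc1 : (1:ℝ) ≤ c := by rw [hcdef]; linarith
  have hcpos : (0:ℝ) < c := by linarith
  obtain ⟨useq, hdense⟩ := TopologicalSpace.exists_dense_seq (E d)
  set g : ℕ → E d → ℝ := fun m y =>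
    if useq m ∈ VSet X y then (1/2)^m * (c - ⟪useq m, y⟫) else 0 with hgdef
  have hg_of_mem : ∀ (m : ℕ) (y : E d), useq m ∈ VSet X y →
      g m y = (1/2)^m * (c - ⟪useq m, y⟫) := fun m y h => by simp only [hgdef, h, if_true]
  have hg_of_not : ∀ (m : ℕ) (y : E d), useq m ∉ VSet X y → g m y = 0 :=
    fun m y h => by simp only [hgdef, h, if_false]
  have hinner_bound : ∀ (u y : E d), u ∈ VSet X y → y ∈ MSet X → |⟪u, y⟫| ≤ 2 * R := by
    intro u y hu hy
    calc |⟪u, y⟫| ≤ ‖u‖ * ‖y‖ := abs_real_inner_le_norm _ _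
      _ ≤ 2 * R := mul_le_mul hu.2.1.le (hMb y hy) (norm_nonneg _) (by norm_num)
  have hb : ∀ y ∈ MSet X, ∀ m : ℕ, 0 ≤ g m y ∧ g m y ≤ (1/2)^m * (2*c) := by
    intro y hy m
    by_cases h : useq m ∈ VSet X y
    · rw [hg_of_mem m y h]
      have habs := abs_le.mp (hinner_bound _ _ h hy)
      constructor
      · apply mul_nonneg (by positivity)
        rw [hcdef]; linarith [habs.2]
      · apply mul_le_mul_of_nonneg_left _ (by positivity : (0:ℝ) ≤ (1/2:ℝ)^m)
        rw [hcdef]; linarith [habs.1]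
    · rw [hg_of_not m y h]
      exact ⟨le_refl 0, by positivity⟩
  have hgeom : Summable (fun m : ℕ => (1/2:ℝ)^m * (2*c)) :=
    (summable_geometric_of_lt_one (by norm_num) (by norm_num)).mul_right _
  have hsum : ∀ y ∈ MSet X, Summable (fun m => g m y) := fun y hy =>
    Summable.of_nonneg_of_le (fun m => (hb y hy m).1) (fun m => (hb y hy m).2) hgeom
  set F : E d → ℝ := fun y => ∑' m, g m y with hFdef
  have hF0 : ∀ y ∈ MSet X, 0 ≤ F y := fun y hy => by
    simp only [hFdef]; exact tsum_nonneg fun m => (hb y hy m).1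
  -- strict decrease under the "bad" relation
  have hdec : ∀ x z : E d, z ∈ MSet X → x ≠ z → USet X x ∩ HSet x z = ∅ →
      x ∈ MSet X ∧ F x < F z := by
    intro x z hz hxz hE
    obtain ⟨hxM, hV⟩ := bad_step hd hz hxz hE
    refine ⟨hxM, ?_⟩
    obtain ⟨m₀, hm₀⟩ := hdense.exists_mem_open (VSet_isOpen X x) (VSet_nonempty hd X x)
    have hle : ∀ m : ℕ, g m x ≤ g m z := by
      intro m
      by_cases h : useq m ∈ VSet X x
      · obtain ⟨hVz, hlt⟩ := hV _ h
        rw [hg_of_mem m x h, hg_of_mem m z hVz]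
        apply mul_le_mul_of_nonneg_left _ (by positivity : (0:ℝ) ≤ (1/2:ℝ)^m)
        linarith
      · rw [hg_of_not m x h]
        exact (hb z hz m).1
    have hstrict : g m₀ x < g m₀ z := by
      obtain ⟨hVz, hlt⟩ := hV _ hm₀
      rw [hg_of_mem m₀ x hm₀, hg_of_mem m₀ z hVz]
      apply mul_lt_mul_of_pos_left _ (by positivity : (0:ℝ) < (1/2:ℝ)^m₀)
      linarith
    simp only [hFdef]
    exact Summable.tsum_lt_tsum_of_nonneg (fun m => (hb x hxM m).1) hle hstrict (hsum z hz)
  -- minimize F over MSet X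
  have himg : (F '' MSet X).Nonempty := hMne.image F
  have hbdd : BddBelow (F '' MSet X) := by
    refine ⟨0, ?_⟩
    rintro r ⟨y, hy, rfl⟩
    exact hF0 y hy
  set I : ℝ := sInf (F '' MSet X) with hIdef
  obtain ⟨rseq, -, hrlim, hrmem⟩ := exists_seq_tendsto_sInf himg hbdd
  choose y hyM hyF using hrmem
  obtain ⟨z, hzM, φ, hφmono, hφlim⟩ := hMc.tendsto_subseq hyM
  have hFz_le : ∀ ε : ℝ, 0 < ε → F z ≤ I + ε := by
    intro ε hε
    obtain ⟨N, hN⟩ := exists_pow_lt_of_lt_one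
      (x := ε / (12 * c)) (by positivity) (by norm_num : (1/2:ℝ) < 1)
    set ε' : ℝ := ε / (3 * (N + 1)) with hε'def
    have hε'pos : 0 < ε' := by rw [hε'def]; positivity
    have hev1 : ∀ᶠ j in atTop, ∀ m ∈ Finset.range N, g m z ≤ g m (y (φ j)) + ε' := by
      rw [eventually_all_finset]
      intro m hm
      by_cases h : useq m ∈ VSet X z
      · obtain ⟨δ, hδ, hstab⟩ := VSet_stable hzM h
        have hev_close : ∀ᶠ j in atTop, ‖y (φ j) - z‖ < δ := by
          have hball := hφlim (Metric.ball_mem_nhds z hδ)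
          rw [Filter.mem_map] at hball
          filter_upwards [hball] with j hj
          have : dist (y (φ j)) z < δ := hj
          rwa [dist_eq_norm] at this
        have htends : Tendsto (fun j => ⟪useq m, y (φ j)⟫) atTop (𝓝 ⟪useq m, z⟫) :=
          Filter.Tendsto.inner tendsto_const_nhds hφlim
        have hev_inner : ∀ᶠ j in atTop, |⟪useq m, y (φ j)⟫ - ⟪useq m, z⟫| < ε' := by
          have := Metric.tendsto_nhds.mp htends ε' hε'pos
          filter_upwards [this] with j hj
          rwa [Real.dist_eq] at hj
        filter_upwards [hev_close, hev_inner] with j h1 h2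
        have hVy : useq m ∈ VSet X (y (φ j)) := hstab _ (hyM (φ j)) h1
        rw [hg_of_mem m z h, hg_of_mem m _ hVy]
        have hpow1 : (1/2:ℝ)^m ≤ 1 := by
          apply pow_le_one₀ <;> norm_num
        have hpow0 : (0:ℝ) ≤ (1/2:ℝ)^m := by positivity
        have habs := abs_lt.mp h2
        nlinarith [habs.1, habs.2]
      · rw [hg_of_not m z h]
        filter_upwards with j
        have := (hb _ (hyM (φ j)) m).1
        linarith
    have hcomp : Tendsto (fun j => F (y (φ j))) atTop (𝓝 I) := by
      have h1 : Tendsto (fun j => rseq (φ j)) atTop (𝓝 I) :=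
        hrlim.comp hφmono.tendsto_atTop
      have h2 : (fun j => F (y (φ j))) = fun j => rseq (φ j) := by
        funext j; exact hyF (φ j)
      rw [h2]; exact h1
    have hev2 : ∀ᶠ j in atTop, F (y (φ j)) ≤ I + ε/3 :=
      hcomp.eventually (eventually_le_nhds (by linarith : I < I + ε/3))
    obtain ⟨j, h1, h2⟩ := (hev1.and hev2).exists
    have hyjM := hyM (φ j)
    have hdecomp : ∑ m ∈ Finset.range N, g m z + ∑' m, g (m + N) z = F z := by
      simp only [hFdef]
      exact Summable.sum_add_tsum_nat_add N (hsum z hzM)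
    have htailsum : Summable (fun m => g (m + N) z) :=
      (summable_nat_add_iff N).mpr (hsum z hzM)
    have htail : ∑' m, g (m + N) z ≤ ε / 3 := by
      have hsumr : Summable (fun m : ℕ => (1/2:ℝ)^(m+N) * (2*c)) := by
        have heqf : (fun m : ℕ => (1/2:ℝ)^(m+N) * (2*c))
            = fun m : ℕ => ((1/2:ℝ)^N * (2*c)) * (1/2)^m := by
          funext m; rw [pow_add]; ring
        rw [heqf]
        exact (summable_geometric_of_lt_one (by norm_num) (by norm_num)).mul_left _
      have hle1 : ∑' m, g (m + N) z ≤ ∑' m : ℕ, (1/2:ℝ)^(m+N) * (2*c) :=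
        Summable.tsum_le_tsum (fun m => (hb z hzM (m+N)).2) htailsum hsumr
      have heq : ∑' m : ℕ, (1/2:ℝ)^(m+N) * (2*c) = (1/2)^N * (4*c) := by
        have heqf : ∀ m : ℕ, (1/2:ℝ)^(m+N) * (2*c) = ((1/2:ℝ)^N * (2*c)) * (1/2)^m := by
          intro m; rw [pow_add]; ring
        rw [tsum_congr heqf, tsum_mul_left,
          tsum_geometric_of_lt_one (by norm_num) (by norm_num)]
        norm_num
        ring
      have hfin : (1/2:ℝ)^N * (4*c) ≤ ε / 3 := by
        have h4c : (0:ℝ) < 4 * c := by linarith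
        have := mul_le_mul_of_nonneg_right hN.le h4c.le
        calc (1/2:ℝ)^N * (4*c) ≤ ε / (12*c) * (4*c) := this
          _ = ε / 3 := by field_simp; ring
      linarith
    have hmain : ∑ m ∈ Finset.range N, g m z ≤ F (y (φ j)) + ε/3 := by
      have hs1 : ∑ m ∈ Finset.range N, g m z
          ≤ ∑ m ∈ Finset.range N, (g m (y (φ j)) + ε') := Finset.sum_le_sum h1
      have hs2 : ∑ m ∈ Finset.range N, (g m (y (φ j)) + ε')
          = ∑ m ∈ Finset.range N, g m (y (φ j)) + N * ε' := by
        rw [Finset.sum_add_distrib, Finset.sum_const, Finset.card_range, nsmul_eq_mul]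
      have hNe : (N:ℝ) * ε' ≤ ε / 3 := by
        have h0 : (N:ℝ) * ε' = (N:ℝ) * ε / (3 * (N + 1)) := by rw [hε'def]; ring
        rw [h0, div_le_div_iff₀ (by positivity) (by norm_num : (0:ℝ) < 3)]
        nlinarith [hε.le, Nat.cast_nonneg (α := ℝ) N]
      have hpartial : ∑ m ∈ Finset.range N, g m (y (φ j)) ≤ F (y (φ j)) := by
        simp only [hFdef]
        exact Summable.sum_le_tsum _ (fun m _ => (hb _ hyjM m).1) (hsum _ hyjM)
      linarith
    linarith [hdecomp, htail, hmain, h2]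
  have hFzI : F z ≤ I := by
    by_contra hcon
    push_neg at hcon
    have := hFz_le ((F z - I)/2) (by linarith)
    linarith
  refine ⟨z, hzM, fun x hx => ?_⟩
  by_contra hcon
  rw [Set.not_nonempty_iff_eq_empty] at hcon
  obtain ⟨hxM, hlt⟩ := hdec x z hzM hx hcon
  have hIle : I ≤ F x := csInf_le hbdd ⟨x, hxM, rfl⟩
  linarith

end Lemma3Aux
/-- **Lemma 3.** If `X` is in general position in `ℝ^d` (`d ≥ 1`), there is a
deepest point `x₀ ∈ M(X)` such that every `x ≠ x₀` has an optimal direction `u ∈ U_x` with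
`⟪u, x⟫ < ⟪u, x₀⟫`, i.e. `U_x ∩ H_{x,x₀} ≠ ∅`. -/
theorem lemma3 {d n : ℕ} (hd : 1 ≤ d) (X : Fin n → E d)
    (hX : inGeneralPosition X) :
    ∃ x₀ ∈ MSet X, ∀ x : E d, x ≠ x₀ → (USet X x ∩ HSet x x₀).Nonempty := by
  rcases Nat.eq_zero_or_pos n with hn | hn
  · subst hn
    have hdepth0 : ∀ x : E d, depth X x = 0 := by
      intro x
      obtain ⟨u, hu, h⟩ := Lemma3Aux.depth_attained hd X x
      rw [← h]
      norm_num
    have hmax0 : maxDepth X = 0 := by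
      have h : depth X = fun _ => 0 := funext hdepth0
      rw [maxDepth, h, Set.range_const, csSup_singleton]
    have hM : ∀ x : E d, x ∈ MSet X := fun x => by
      simp [MSet, hdepth0, hmax0]
    refine ⟨0, hM 0, fun x hx => ?_⟩
    have hxpos : 0 < ‖x‖ := norm_pos_iff.mpr hx
    have hunorm : ‖-(‖x‖⁻¹ • x)‖ = 1 := by
      rw [norm_neg, norm_smul, norm_inv, norm_norm, inv_mul_cancel₀ hxpos.ne']
    refine ⟨-(‖x‖⁻¹ • x), ⟨⟨hunorm, ?_⟩, hunorm, ?_⟩⟩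
    · rw [hdepth0]
      norm_num
    · show ⟪-(‖x‖⁻¹ • x), x⟫ < ⟪-(‖x‖⁻¹ • x), (0 : E d)⟫
      rw [inner_zero_right, inner_neg_left, real_inner_smul_left,
        real_inner_self_eq_norm_sq]
      have hq : 0 < ‖x‖⁻¹ * ‖x‖^2 := by positivity
      linarith
  · obtain ⟨z, hz, hgood⟩ := Lemma3Aux.exists_good hd hn X
    exact ⟨z, hz, hgood⟩
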